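/- Let a₁, a₂, …, a_k be positive integers with gcd(a₁,…,a_k) = 1, and let λ be a complex number with λ ≠ 0, λ ≠ 1 and λ^{a₁} = 1. Then ∑_{n ∈ NR} λⁿ n = (1/(2a₁)) ∑_{i=1}^{a₁−1} m_i² λ^{i} − (1/2) ∑_{i=1}^{a₁−1} m_i λ^{i} + λ/(λ − 1)². -/

import Mathlib

open Finset

lemma gaussC (t : ℕ) : (∑ j ∈ range t, (j:ℂ)) * 2 = t * (t - 1) := by
  induction t with
  | zero => simp
  | succ n ih => rw [sum_range_succ]; push_cast; push_cast at ih; ring_nf; ring_nf at ih; linear_combination ih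

lemma sum1C (lam : ℂ) (n : ℕ) :
    (lam - 1)^2 * ∑ i ∈ range n, (i:ℂ) * lam ^ i
      = lam - n * lam ^ n + (n - 1) * lam ^ (n+1) := by
  induction n with
  | zero => simp
  | succ n ih =>
    rw [sum_range_succ]; push_cast
    ring_nf; ring_nf at ih; linear_combination ih

lemma sum2C (lam : ℂ) (n : ℕ) :
    (lam - 1)^3 * ∑ i ∈ range n, (i:ℂ)^2 * lam ^ i
      = -lam - lam^2 + n^2 * lam ^ n + (-2*n^2 + 2*n + 1) * lam ^ (n+1)
        + (n - 1)^2 * lam ^ (n+2) := by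
  induction n with
  | zero => simp; ring
  | succ n ih =>
    rw [sum_range_succ]; push_cast
    ring_nf; ring_nf at ih; linear_combination ih

lemma keyC (lam : ℂ) (hlam1 : lam ≠ 1) (A : ℕ) (hA : lam ^ A = 1) :
    ∑ i ∈ range A, (i:ℂ) * ((i:ℂ) - A) * lam ^ i
      = -2 * A * lam / (lam - 1)^2 := by
  have h1 : lam - 1 ≠ 0 := sub_ne_zero.mpr hlam1
  rw [eq_div_iff (pow_ne_zero 2 h1)]
  have e1 := sum1C lam A
  have e2 := sum2C lam A
  have expand : ∑ i ∈ range A, (i:ℂ) * ((i:ℂ) - A) * lam ^ i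
      = (∑ i ∈ range A, (i:ℂ)^2 * lam ^ i) - A * ∑ i ∈ range A, (i:ℂ) * lam ^ i := by
    rw [mul_sum, ← sum_sub_distrib]
    apply sum_congr rfl; intro i _; ring
  have hA1 : lam ^ (A+1) = lam := by rw [pow_succ, hA, one_mul]
  have hA2 : lam ^ (A+2) = lam^2 := by rw [pow_add, hA, one_mul]
  have h3 : (lam - 1)^3 ≠ 0 := pow_ne_zero 3 h1
  apply mul_left_cancel₀ h3
  rw [expand]
  rw [hA1] at e1
  rw [hA1, hA2] at e2
  rw [hA] at e1 e2
  ring_nf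
  ring_nf at e1 e2
  linear_combination (lam-1)^2 * e2 - (A:ℂ) * (lam-1)^3 * e1

/-- the weighted sum `∑_{n ∈ NR} λⁿ n` for `λ ≠ 0`, `λ ≠ 1`, `λ^{a₁} = 1`. -/
theorem weighted_sylvester_sum_root_of_unity
    (k : ℕ) (hk : 0 < k) (a : Fin k → ℕ) (ha : ∀ i, 0 < a i)
    (hgcd : Finset.univ.gcd a = 1)
    (lam : ℂ) (hlam0 : lam ≠ 0) (hlam1 : lam ≠ 1) (hlama : lam ^ a ⟨0, hk⟩ = 1)
    (m : ℕ → ℕ)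
    (hm : ∀ i, 1 ≤ i → i < a ⟨0, hk⟩ →
      0 < m i ∧ (∃ x : Fin k → ℕ, m i = ∑ j, x j * a j) ∧ m i % a ⟨0, hk⟩ = i ∧
        ∀ n : ℕ, 0 < n → (∃ x : Fin k → ℕ, n = ∑ j, x j * a j) → n % a ⟨0, hk⟩ = i →
          m i ≤ n) :
    ∑ᶠ n ∈ {n : ℕ | 0 < n ∧ ¬∃ x : Fin k → ℕ, n = ∑ j, x j * a j},
        lam ^ n * (n : ℂ) =
      (1 / (2 * (a ⟨0, hk⟩ : ℂ))) *
          ∑ i ∈ Finset.Ico 1 (a ⟨0, hk⟩), (m i : ℂ) ^ 2 * lam ^ i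
        - (1 / 2) * ∑ i ∈ Finset.Ico 1 (a ⟨0, hk⟩), (m i : ℂ) * lam ^ i
        + lam / (lam - 1) ^ 2 := by
  classical
  set i0 : Fin k := ⟨0, hk⟩ with hi0
  set A : ℕ := a i0 with hAdef
  have hApos : 0 < A := ha i0
  have hAC : (A : ℂ) ≠ 0 := Nat.cast_ne_zero.mpr hApos.ne'
  have h1 : lam - 1 ≠ 0 := sub_ne_zero.mpr hlam1
  -- closure of representability under adding multiples of A
  have hrep_add : ∀ (n c : ℕ), (∃ x : Fin k → ℕ, n = ∑ j, x j * a j) →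
      (∃ x : Fin k → ℕ, n + c * A = ∑ j, x j * a j) := by
    rintro n c ⟨x, hx⟩
    refine ⟨Function.update x i0 (x i0 + c), ?_⟩
    have hpt : ∀ j, (Function.update x i0 (x i0 + c)) j * a j
        = x j * a j + (if j = i0 then c * A else 0) := by
      intro j
      by_cases h : j = i0
      · subst h; simp [Function.update_self]; ring
      · simp [Function.update_of_ne h, h]
    rw [Finset.sum_congr rfl (fun j _ => hpt j), Finset.sum_add_distrib,
      Finset.sum_ite_eq' Finset.univ i0 (fun _ => c * A)]
    simp [← hx]
  have hrep_mul : ∀ q : ℕ, (∃ x : Fin k → ℕ, q * A = ∑ j, x j * a j) := by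
    intro q
    have h0 : (∃ x : Fin k → ℕ, 0 = ∑ j, x j * a j) := ⟨fun _ => 0, by simp⟩
    simpa using hrep_add 0 q h0
  set t : ℕ → ℕ := fun i => m i / A with ht
  have hmval : ∀ i, 1 ≤ i → i < A → m i = t i * A + i := by
    intro i h1i h2i
    have h := (hm i h1i h2i).2.2.1
    conv_lhs => rw [← Nat.div_add_mod (m i) A]
    rw [h, Nat.mul_comm]
  have hmodji : ∀ j i, i < A → (j * A + i) % A = i := by
    intro j i hiA
    rw [Nat.add_comm, Nat.add_mul_mod_self_right, Nat.mod_eq_of_lt hiA]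
  set F : Finset ℕ :=
    (Finset.Ico 1 A).biUnion (fun i => (range (t i)).image (fun j => j * A + i)) with hF
  have hset : {n : ℕ | 0 < n ∧ ¬∃ x : Fin k → ℕ, n = ∑ j, x j * a j} = ↑F := by
    ext n
    simp only [Set.mem_setOf_eq, hF, coe_biUnion, mem_coe, mem_Ico, Set.mem_iUnion,
      coe_image, Set.mem_image, mem_range, exists_prop, Set.mem_Ico]
    constructor
    · rintro ⟨hn, hnr⟩
      have hmod : 1 ≤ n % A := by
        rcases Nat.eq_zero_or_pos (n % A) with h | h
        · exfalso
          have hn' : n = (n / A) * A := by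
            conv_lhs => rw [← Nat.div_add_mod n A]
            rw [h, Nat.add_zero, Nat.mul_comm]
          exact hnr (hn' ▸ hrep_mul (n / A))
        · exact h
      have hmodlt : n % A < A := Nat.mod_lt _ hApos
      refine ⟨n % A, ⟨hmod, hmodlt⟩, n / A, ?_, Nat.div_add_mod' n A⟩
      obtain ⟨-, hrepm, hmmod, -⟩ := hm (n % A) hmod hmodlt
      have hlt : n < m (n % A) := by
        by_contra hge
        push_neg at hge
        have hmodeq : (n - m (n % A)) % A = 0 := by
          exact Nat.sub_mod_eq_zero_of_mod_eq (by rw [hmmod])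
        have hdvd : A ∣ n - m (n % A) := Nat.dvd_of_mod_eq_zero hmodeq
        have : n = m (n % A) + ((n - m (n % A)) / A) * A := by
          rw [Nat.div_mul_cancel hdvd]
          omega
        exact hnr (this ▸ hrep_add _ _ hrepm)
      -- n / A < t (n % A)
      have hmv := hmval (n % A) hmod hmodlt
      have hnv : n = (n / A) * A + n % A := (Nat.div_add_mod' n A).symm
      have : (n / A) * A < t (n % A) * A := by omega
      exact Nat.lt_of_mul_lt_mul_right this
    · rintro ⟨i, ⟨hi1, hiA⟩, j, hj, rfl⟩
      refine ⟨by omega, ?_⟩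
      rintro hrep
      obtain ⟨-, -, -, hminl⟩ := hm i hi1 hiA
      have hle : m i ≤ j * A + i := hminl _ (by omega) hrep (hmodji j i hiA)
      have hmv := hmval i hi1 hiA
      have hmul : (j + 1) * A ≤ t i * A := Nat.mul_le_mul_right _ hj
      rw [Nat.succ_mul] at hmul
      omega
  rw [hset, finsum_mem_coe_finset, hF]
  have hdisj : (↑(Finset.Ico 1 A) : Set ℕ).PairwiseDisjoint
      (fun i => (range (t i)).image (fun j => j * A + i)) := by
    intro i hi i' hi' hne
    simp only [Set.mem_setOf_eq, mem_coe, mem_Ico] at hi hi'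
    rw [Function.onFun, Finset.disjoint_left]
    rintro n hn hn'
    simp only [mem_image, mem_range] at hn hn'
    obtain ⟨j, -, rfl⟩ := hn
    obtain ⟨j', -, e⟩ := hn'
    apply hne
    have h1' := hmodji j i hi.2
    have h2' := hmodji j' i' hi'.2
    rw [e] at h2'
    rw [← h1', ← h2']
  rw [Finset.sum_biUnion hdisj]
  have hinner : ∀ i ∈ Finset.Ico 1 A,
      (∑ n ∈ (range (t i)).image (fun j => j * A + i), lam ^ n * (n : ℂ))
        = lam ^ i * ((A : ℂ) * (∑ j ∈ range (t i), (j:ℂ)) + (t i : ℂ) * i) := by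
    intro i hi
    rw [Finset.sum_image (by
      intro x _ y _ hxy
      have : x * A = y * A := by simp only at hxy; omega
      exact Nat.eq_of_mul_eq_mul_right hApos this)]
    have hpow : ∀ j : ℕ, lam ^ (j * A + i) = lam ^ i := by
      intro j
      rw [pow_add, Nat.mul_comm j A, pow_mul, hlama, one_pow, one_mul]
    calc ∑ j ∈ range (t i), lam ^ (j * A + i) * ((j * A + i : ℕ) : ℂ)
        = ∑ j ∈ range (t i), lam ^ i * ((j : ℂ) * A + i) := by
          apply sum_congr rfl; intro j _; rw [hpow]; push_cast; ring
      _ = lam ^ i * ((∑ j ∈ range (t i), (j:ℂ)) * A + (t i : ℂ) * i) := by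
          rw [← mul_sum, sum_add_distrib, ← sum_mul, sum_const, card_range, nsmul_eq_mul]
      _ = lam ^ i * ((A : ℂ) * (∑ j ∈ range (t i), (j:ℂ)) + (t i : ℂ) * i) := by
          ring
  rw [Finset.sum_congr rfl hinner]
  have keysum : ∑ i ∈ Finset.Ico 1 A, (i:ℂ) * ((i:ℂ) - A) * lam ^ i
      = -2 * A * lam / (lam - 1)^2 := by
    have h := keyC lam hlam1 A hlama
    rw [range_eq_Ico, Finset.sum_eq_sum_Ico_succ_bot hApos] at h
    simpa using h
  have hterm : ∀ i ∈ Finset.Ico 1 A,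
      lam ^ i * ((A : ℂ) * (∑ j ∈ range (t i), (j:ℂ)) + (t i : ℂ) * i)
        = (1 / (2 * (A:ℂ))) * ((m i : ℂ)^2 * lam ^ i)
          - (1/2) * ((m i : ℂ) * lam ^ i)
          - (1 / (2 * (A:ℂ))) * ((i:ℂ) * ((i:ℂ) - A) * lam ^ i) := by
    intro i hi
    rw [mem_Ico] at hi
    have hg := gaussC (t i)
    have hmc : (m i : ℂ) = (t i : ℂ) * A + i := by
      rw [hmval i hi.1 hi.2]; push_cast; ring
    rw [hmc]
    field_simp
    linear_combination ((A:ℂ)^2) * hg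
  rw [Finset.sum_congr rfl hterm, sum_sub_distrib, sum_sub_distrib,
    ← mul_sum, ← mul_sum, ← mul_sum, keysum]
  have : (1 / (2 * (A:ℂ))) * (-2 * A * lam / (lam - 1)^2) = -(lam / (lam-1)^2) := by
    field_simp
  rw [this]
  ring
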